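/- Let h : ℕ → ℕ be monotone with h(x) ≥ x. Then the length hierarchy (h_α) is monotone in both arguments: (i) x < y implies h_α(x) ≤ h_α(y); (ii) α' ⊏_x α implies h_{α'}(x) ≤ h_α(x). -/

import Mathlib

/-- Ordinal terms below ε₀: a term is a list of exponents,
`cons β γ` denoting ω^β + γ. -/
inductive OT : Type
  | nil : OT
  | cons : OT → OT → OT
deriving DecidableEq

namespace OT

/-- The term 1 = ω^0. -/
def one : OT := cons nil nil

/-- Syntactic concatenation (direct sum) of ordinal terms. -/
def add : OT → OT → OT
  | nil, b => b
  | cons e r, b => cons e (add r b)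

/-- A term ω^{β₁}+...+ω^{β_m} is a successor iff m > 0 and β_m = 0. -/
def isSucc : OT → Bool
  | nil => false
  | cons e nil => e == nil
  | cons _ (cons e r) => isSucc (cons e r)

/-- Remove the last summand ω^0 of a successor term. -/
def pred : OT → OT
  | nil => nil
  | cons _ nil => nil
  | cons e (cons e' r) => cons e (pred (cons e' r))

/-- Limit terms. -/
def isLim (a : OT) : Prop := a ≠ nil ∧ isSucc a = false

/-- ω^β · n as an ordinal term. -/
def rep : ℕ → OT → OT
  | 0, _ => nil
  | n + 1, β => cons β (rep n β)

/-- The standard assignment of fundamental sequences (with ω_x = x+1):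
(γ+ω^{β+1})_x = γ+ω^β·(x+1) and (γ+ω^λ)_x = γ+ω^{λ_x}. -/
def fseq : OT → ℕ → OT
  | nil, _ => nil
  | cons β nil, x =>
      if β = nil then nil
      else if isSucc β then rep (x + 1) (pred β)
      else cons (fseq β x) nil
  | cons β (cons e r), x => cons β (fseq (cons e r) x)

/-- Syntactic ordering of terms (on CNF terms this is the ordinal ordering). -/
def lt : OT → OT → Prop
  | _, nil => False
  | nil, cons _ _ => True
  | cons a r, cons b s => lt a b ∨ (a = b ∧ lt r s)

def le (a b : OT) : Prop := lt a b ∨ a = b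

/-- Cantor normal form: exponents weakly decreasing, all in CNF. -/
def isCNF : OT → Prop
  | nil => True
  | cons b nil => isCNF b
  | cons b (cons e r) => isCNF b ∧ le e b ∧ isCNF (cons e r)

/-- Number of occurrences of the exponent β in a term. -/
def count (β : OT) : OT → ℕ
  | nil => 0
  | cons b r => (if b = β then 1 else 0) + count β r

/-- k-lean: every coefficient (at every level) is ≤ k. -/
def leanOrd (k : ℕ) : OT → Prop
  | nil => True
  | cons b r => count b (cons b r) ≤ k ∧ leanOrd k b ∧ leanOrd k r

end OT

/-- Pointwise-at-x ordering: smallest transitive relation with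
α ⊏_x α+1 and λ_x ⊏_x λ. -/
inductive Ptw (x : ℕ) : OT → OT → Prop
  | succ (a : OT) : Ptw x a (OT.add a OT.one)
  | lim (l : OT) : OT.isLim l → Ptw x (OT.fseq l x) l
  | trans {a b c : OT} : Ptw x a b → Ptw x b c → Ptw x a c

namespace OT

open Ordinal

noncomputable def o : OT → Ordinal.{0}
  | nil => 0
  | cons b r => omega0 ^ (o b) + o r

lemma olt1 (a : Ordinal) : a < a + 1 := by
  rw [Ordinal.add_one_eq_succ]; exact Order.lt_succ a

lemma add_nil : ∀ a, add a nil = a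
  | nil => rfl
  | cons e r => by simp [add, add_nil r]

lemma add_assoc' : ∀ a b c, add (add a b) c = add a (add b c)
  | nil, _, _ => rfl
  | cons e r, b, c => by simp [add, add_assoc' r]

lemma add_shape : ∀ a e r, ∃ e' r', add a (cons e r) = cons e' r'
  | nil, e, r => ⟨e, r, rfl⟩
  | cons b s, e, r => ⟨b, add s (cons e r), rfl⟩

lemma isSucc_add : ∀ a e r, isSucc (add a (cons e r)) = isSucc (cons e r)
  | nil, _, _ => rfl
  | cons b s, e, r => by
      obtain ⟨e', r', hs⟩ := add_shape s e r
      show isSucc (cons b (add s (cons e r))) = _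
      rw [hs]
      have : isSucc (cons b (cons e' r')) = isSucc (cons e' r') := by simp [isSucc]
      rw [this, ← hs, isSucc_add s e r]

lemma pred_add : ∀ a e r, pred (add a (cons e r)) = add a (pred (cons e r))
  | nil, _, _ => rfl
  | cons b s, e, r => by
      obtain ⟨e', r', hs⟩ := add_shape s e r
      show pred (cons b (add s (cons e r))) = cons b (add s (pred (cons e r)))
      rw [hs]
      have : pred (cons b (cons e' r')) = cons b (pred (cons e' r')) := by simp [pred]
      rw [this, ← hs, pred_add s e r]

lemma fseq_add : ∀ a e r x, fseq (add a (cons e r)) x = add a (fseq (cons e r) x)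
  | nil, _, _, _ => rfl
  | cons b s, e, r, x => by
      obtain ⟨e', r', hs⟩ := add_shape s e r
      show fseq (cons b (add s (cons e r))) x = cons b (add s (fseq (cons e r) x))
      rw [hs]
      have : fseq (cons b (cons e' r')) x = cons b (fseq (cons e' r') x) := by simp [fseq]
      rw [this, ← hs, fseq_add s e r x]

lemma isLim_cons_nil {β : OT} (hβ : β ≠ nil) : isLim (cons β nil) :=
  ⟨by simp, by simp [isSucc, hβ]⟩

lemma isLim_add {a c : OT} (hc : isLim c) : isLim (add a c) := by
  obtain ⟨hne, hs⟩ := hc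
  cases c with
  | nil => exact absurd rfl hne
  | cons e r =>
      obtain ⟨e', r', hsh⟩ := add_shape a e r
      exact ⟨by rw [hsh]; simp, by rw [isSucc_add]; exact hs⟩

lemma isSucc_add_one (a : OT) : isSucc (add a one) = true := by
  have := isSucc_add a nil nil
  simpa [one, isSucc] using this

lemma pred_add_one (a : OT) : pred (add a one) = a := by
  have := pred_add a nil nil
  simpa [one, pred, add_nil] using this

lemma add_one_ne_nil (a : OT) : add a one ≠ nil := by
  obtain ⟨e', r', hs⟩ := add_shape a nil nil
  rw [show (one : OT) = cons nil nil from rfl, hs]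
  simp

lemma fseq_cons_nil_succ {β : OT} (hs : isSucc β = true) (x : ℕ) :
    fseq (cons β nil) x = rep (x + 1) (pred β) := by
  have hβ : β ≠ nil := by rintro rfl; simp [isSucc] at hs
  simp [fseq, hβ, hs]

lemma fseq_cons_nil_lim {β : OT} (hβ : β ≠ nil) (hs : isSucc β = false) (x : ℕ) :
    fseq (cons β nil) x = cons (fseq β x) nil := by
  simp [fseq, hβ, hs]

lemma rep_add_one (β : OT) : ∀ k, add (rep k β) (cons β nil) = rep (k + 1) β
  | 0 => rfl
  | k + 1 => by
      show cons β (add (rep k β) (cons β nil)) = cons β (rep (k + 1) β)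
      rw [rep_add_one β k]

lemma rep_add (β : OT) : ∀ j k, add (rep j β) (rep k β) = rep (j + k) β
  | 0, k => by rw [Nat.zero_add]; rfl
  | j + 1, k => by
      rw [Nat.succ_add]
      show cons β (add (rep j β) (rep k β)) = cons β (rep (j + k) β)
      rw [rep_add β j k]

lemma o_add : ∀ a b, o (add a b) = o a + o b
  | nil, b => by simp [o, add]
  | cons e r, b => by simp [o, add, o_add r, add_assoc]

lemma o_one : o one = 1 := by simp [one, o]

lemma o_rep (β : OT) : ∀ k, o (rep k β) = omega0 ^ (o β) * k
  | 0 => by simp [rep, o]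
  | k + 1 => by
      show omega0 ^ (o β) + o (rep k β) = _
      rw [o_rep β k, show ((k + 1 : ℕ) : Ordinal) = 1 + (k : Ordinal) by
        norm_cast; omega, mul_add, mul_one]

lemma o_pred : ∀ a, isSucc a = true → o a = o (pred a) + 1
  | nil, h => by simp [isSucc] at h
  | cons e nil, h => by
      have he : e = nil := by simpa [isSucc] using h
      subst he; simp [o, pred, one]
  | cons e (cons e' r), h => by
      have h' : isSucc (cons e' r) = true := by simpa [isSucc] using h
      show omega0 ^ (o e) + o (cons e' r) = o (cons e (pred (cons e' r))) + 1
      rw [o_pred (cons e' r) h']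
      show _ = (omega0 ^ (o e) + o (pred (cons e' r))) + 1
      rw [add_assoc]

lemma o_pred_lt {a : OT} (hs : isSucc a = true) : o (pred a) < o a := by
  rw [o_pred a hs]; exact olt1 _

lemma o_fseq_lt : ∀ a, isLim a → ∀ x, o (fseq a x) < o a
  | nil, h, _ => absurd rfl h.1
  | cons β nil, h, x => by
      have hβ : β ≠ nil := by
        intro hc; subst hc
        have h2 := h.2; simp [isSucc] at h2
      by_cases hs : isSucc β = true
      · rw [fseq_cons_nil_succ hs, o_rep]
        show _ < omega0 ^ (o β) + o nil
        rw [show o (nil : OT) = 0 from rfl, add_zero, o_pred β hs, opow_add, opow_one]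
        exact (mul_lt_mul_iff_right₀ (opow_pos _ omega0_pos)).2 (nat_lt_omega0 _)
      · have hs' : isSucc β = false := by simpa using hs
        rw [fseq_cons_nil_lim hβ hs' x]
        show omega0 ^ (o (fseq β x)) + o nil < omega0 ^ (o β) + o nil
        rw [show o (nil : OT) = 0 from rfl, add_zero, add_zero]
        exact (opow_lt_opow_iff_right one_lt_omega0).2 (o_fseq_lt β ⟨hβ, hs'⟩ x)
  | cons β (cons e r), h, x => by
      have hlim : isLim (cons e r) := ⟨by simp, by simpa [isSucc] using h.2⟩
      show omega0 ^ (o β) + o (fseq (cons e r) x) < omega0 ^ (o β) + o (cons e r)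
      exact add_lt_add_right (o_fseq_lt (cons e r) hlim x) _

lemma oInd (p : OT → Prop) (H : ∀ a, (∀ b, o b < o a → p b) → p a) : ∀ a, p a := by
  have key : ∀ n : Ordinal, ∀ a, o a = n → p a := by
    intro n
    induction n using Ordinal.induction with
    | h n ih =>
        intro a ha; subst ha
        exact H a (fun b hb => ih (o b) hb b rfl)
  exact fun a => key (o a) a rfl

end OT

open OT

lemma o_lt_of_ptw {x : ℕ} {c d : OT} (hp : Ptw x c d) : o c < o d := by
  induction hp with
  | succ a => rw [o_add, o_one]; exact olt1 _
  | lim l hl => exact o_fseq_lt l hl x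
  | trans _ _ ih1 ih2 => exact ih1.trans ih2

lemma ptw_add_left {x : ℕ} {r r' : OT} (hp : Ptw x r r') :
    ∀ γ, Ptw x (add γ r) (add γ r') := by
  induction hp with
  | succ a => intro γ; rw [← add_assoc']; exact Ptw.succ _
  | lim l hl =>
      intro γ
      cases l with
      | nil => exact absurd rfl hl.1
      | cons e r =>
          rw [← fseq_add]
          exact Ptw.lim _ (isLim_add hl)
  | trans _ _ ih1 ih2 => intro γ; exact (ih1 γ).trans (ih2 γ)

lemma ptw_A (x : ℕ) : ∀ β γ, Ptw x γ (add γ (cons β nil)) := by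
  refine OT.oInd (fun β => ∀ γ, Ptw x γ (add γ (cons β nil))) ?_
  intro β IH γ
  by_cases h0 : β = OT.nil
  · subst h0; exact Ptw.succ γ
  by_cases hs : isSucc β = true
  · have hlim : isLim (add γ (cons β nil)) := isLim_add (isLim_cons_nil h0)
    have hf : fseq (add γ (cons β nil)) x = add γ (rep (x + 1) (pred β)) := by
      rw [fseq_add, fseq_cons_nil_succ hs]
    have hpred : ∀ c, Ptw x c (add c (cons (pred β) nil)) :=
      fun c => IH (pred β) (o_pred_lt hs) c
    have hchain : ∀ k, Ptw x γ (add γ (rep (k + 1) (pred β))) := by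
      intro k
      induction k with
      | zero => exact hpred γ
      | succ k ihk =>
          have h2 := hpred (add γ (rep (k + 1) (pred β)))
          rw [add_assoc', rep_add_one] at h2
          exact ihk.trans h2
    exact (hchain x).trans (hf ▸ Ptw.lim _ hlim)
  · have hs' : isSucc β = false := by simpa using hs
    have hlim : isLim (add γ (cons β nil)) := isLim_add (isLim_cons_nil h0)
    have hf : fseq (add γ (cons β nil)) x = add γ (cons (fseq β x) nil) := by
      rw [fseq_add, fseq_cons_nil_lim h0 hs']
    exact (IH (fseq β x) (o_fseq_lt β ⟨h0, hs'⟩ x) γ).trans (hf ▸ Ptw.lim _ hlim)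

lemma ptw_A' (x : ℕ) (β : OT) : ∀ k c, Ptw x c (add c (rep (k + 1) β)) := by
  intro k
  induction k with
  | zero => intro c; exact ptw_A x β c
  | succ k ih =>
      intro c
      have h2 := ptw_A x β (add c (rep (k + 1) β))
      rw [add_assoc', rep_add_one] at h2
      exact (ih c).trans h2

lemma ptw_C {x : ℕ} {b b' : OT} (hp : Ptw x b b') :
    ∀ γ, Ptw x (add γ (cons b nil)) (add γ (cons b' nil)) := by
  induction hp with
  | succ b =>
      intro γ
      have hsb : isSucc (add b one) = true := isSucc_add_one b
      have hne : add b one ≠ OT.nil := add_one_ne_nil b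
      have hlim : isLim (add γ (cons (add b one) nil)) := isLim_add (isLim_cons_nil hne)
      have hf : ∀ z, fseq (add γ (cons (add b one) nil)) z = add γ (rep (z + 1) b) := by
        intro z; rw [fseq_add, fseq_cons_nil_succ hsb, pred_add_one]
      cases x with
      | zero =>
          have he : fseq (add γ (cons (add b one) nil)) 0 = add γ (cons b nil) := by
            rw [hf 0]; rfl
          exact he ▸ Ptw.lim _ hlim
      | succ m =>
          have h1 : Ptw (m + 1) (add γ (cons b nil)) (fseq (add γ (cons (add b one) nil)) (m + 1)) := by
            rw [hf (m + 1)]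
            have h2 := ptw_A' (m + 1) b m (add γ (cons b nil))
            rw [add_assoc'] at h2
            exact h2
          exact h1.trans (Ptw.lim _ hlim)
  | lim l hl =>
      intro γ
      have hlim2 : isLim (add γ (cons l nil)) := isLim_add (isLim_cons_nil hl.1)
      have hf : fseq (add γ (cons l nil)) x = add γ (cons (fseq l x) nil) := by
        rw [fseq_add, fseq_cons_nil_lim hl.1 hl.2]
      exact hf ▸ Ptw.lim _ hlim2
  | trans _ _ ih1 ih2 => intro γ; exact (ih1 γ).trans (ih2 γ)

lemma ptw_E : ∀ a, isLim a → ∀ x y, x < y → Ptw x (fseq a x) (fseq a y)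
  | OT.nil, h, _, _, _ => absurd rfl h.1
  | OT.cons β OT.nil, h, x, y, hxy => by
      have hβ : β ≠ OT.nil := by
        intro hc; subst hc
        have h2 := h.2; simp [isSucc] at h2
      by_cases hs : isSucc β = true
      · rw [fseq_cons_nil_succ hs, fseq_cons_nil_succ hs]
        obtain ⟨m, rfl⟩ : ∃ m, y = x + m + 1 := ⟨y - x - 1, by omega⟩
        have h2 := ptw_A' x (pred β) m (rep (x + 1) (pred β))
        rw [rep_add] at h2
        have he : x + 1 + (m + 1) = x + m + 1 + 1 := by omega
        rwa [he] at h2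
      · have hs' : isSucc β = false := by simpa using hs
        rw [fseq_cons_nil_lim hβ hs', fseq_cons_nil_lim hβ hs']
        exact ptw_C (ptw_E β ⟨hβ, hs'⟩ x y hxy) OT.nil
  | OT.cons β (OT.cons e r), h, x, y, hxy => by
      have hlim : isLim (OT.cons e r) := ⟨by simp, by simpa [isSucc] using h.2⟩
      have h2 := ptw_add_left (ptw_E (OT.cons e r) hlim x y hxy) (OT.cons β OT.nil)
      exact h2


/-- For monotone h with h(x) ≥ x, the length hierarchy is monotone:
(i) x < y implies h_α(x) ≤ h_α(y); (ii) α' ⊏_x α implies h_{α'}(x) ≤ h_α(x). -/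
theorem stmt17 (h : ℕ → ℕ)
    (hmono : ∀ a b : ℕ, a ≤ b → h a ≤ h b) (hge : ∀ x, x ≤ h x)
    (L : OT → ℕ → ℕ)
    (hL0 : ∀ x, L OT.nil x = 0)
    (hLs : ∀ a x, OT.isSucc a = true → L a x = 1 + L (OT.pred a) (h x))
    (hLl : ∀ a x, OT.isLim a → L a x = L (OT.fseq a x) x) :
    (∀ (a : OT) (x y : ℕ), x < y → L a x ≤ L a y) ∧
    (∀ (a' a : OT) (x : ℕ), Ptw x a' a → L a' x ≤ L a x) := by
  have Q : ∀ x : ℕ, ∀ c d : OT, Ptw x c d →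
      (∀ e : OT, OT.o e < OT.o d → ∀ u v : ℕ, u ≤ v → L e u ≤ L e v) → L c x ≤ L d x := by
    intro x c d hcd
    induction hcd with
    | succ a =>
        intro hp
        rw [hLs (OT.add a OT.one) x (OT.isSucc_add_one a), OT.pred_add_one]
        have h1 : L a x ≤ L a (h x) :=
          hp a (by rw [OT.o_add, OT.o_one]; exact OT.olt1 _) x (h x) (hge x)
        omega
    | lim l hl => intro _; rw [hLl l x hl]
    | trans h1 h2 ih1 ih2 =>
        intro hp
        exact le_trans (ih1 (fun e he => hp e (he.trans (o_lt_of_ptw h2)))) (ih2 hp)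
  have main : ∀ a : OT, ∀ x y : ℕ, x ≤ y → L a x ≤ L a y := by
    refine OT.oInd (fun a => ∀ x y : ℕ, x ≤ y → L a x ≤ L a y) ?_
    intro a IH x y hxy
    rcases eq_or_ne a OT.nil with rfl | hne
    · simp [hL0]
    by_cases hs : OT.isSucc a = true
    · rw [hLs a x hs, hLs a y hs]
      have := IH (OT.pred a) (OT.o_pred_lt hs) (h x) (h y) (hmono _ _ hxy)
      omega
    · have hlim : OT.isLim a := ⟨hne, by simpa using hs⟩
      rcases eq_or_lt_of_le hxy with rfl | hlt
      · exact le_refl _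
      rw [hLl a x hlim, hLl a y hlim]
      have h1 : L (OT.fseq a x) x ≤ L (OT.fseq a y) x :=
        Q x _ _ (ptw_E a hlim x y hlt)
          (fun e he => IH e (he.trans (OT.o_fseq_lt a hlim y)))
      have h2 : L (OT.fseq a y) x ≤ L (OT.fseq a y) y :=
        IH _ (OT.o_fseq_lt a hlim y) x y hxy
      exact h1.trans h2
  exact ⟨fun a x y hxy => main a x y hxy.le,
    fun a' a x hp => Q x a' a hp (fun e _ => main e)⟩
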